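/- The Gaussian mechanism with ℓ₂-sensitivity Δ and noise scale σ satisfies (α, αΔ²/(2σ²))-Rényi differential privacy for every α > 1. -/

import Mathlib

open MeasureTheory ProbabilityTheory
open scoped NNReal ENNReal

/-- Rényi divergence of order `α`. -/
noncomputable def renyiDiv {Ω : Type*} [MeasurableSpace Ω] (α : ℝ) (P Q : Measure Ω) : ℝ :=
  (α - 1)⁻¹ * Real.log (∫ t, ((∂P/∂Q) t).toReal ^ α ∂Q)

/-- The Gaussian mechanism: output `f(X) + Z` with `Z ∼ N(0, σ² I_k)`, i.e. the product of
`k` independent Gaussians centered at the coordinates of `f(X)` with variance `σ²`. -/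
noncomputable def gaussianMechanism {X : Type*} (k : ℕ) (f : X → Fin k → ℝ) (σ : ℝ≥0)
    (x : X) : Measure (Fin k → ℝ) :=
  Measure.pi fun i => gaussianReal (f x i) (σ ^ 2)

open Real

lemma oneDim (μ ν : ℝ) (v : ℝ≥0) (hv : v ≠ 0) (α : ℝ) :
    ∫ y, (gaussianPDFReal μ v y / gaussianPDFReal ν v y) ^ α * gaussianPDFReal ν v y
      = rexp (α * (α - 1) * (μ - ν) ^ 2 / (2 * v)) := by
  have hv' : (0:ℝ) < v := lt_of_le_of_ne v.coe_nonneg (by exact_mod_cast hv.symm)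
  have key : ∀ y, (gaussianPDFReal μ v y / gaussianPDFReal ν v y) ^ α * gaussianPDFReal ν v y
      = rexp (α * (α - 1) * (μ - ν) ^ 2 / (2 * v))
        * gaussianPDFReal (α * μ + (1 - α) * ν) v y := by
    intro y
    have hc : (0:ℝ) < (√(2 * π * v))⁻¹ := by positivity
    simp only [gaussianPDFReal]
    rw [mul_div_mul_left _ _ hc.ne', ← Real.exp_sub,
      Real.rpow_def_of_pos (Real.exp_pos _), Real.log_exp]
    rw [show ∀ a b c : ℝ, rexp a * (c * rexp b) = c * rexp (a + b) from
      fun a b c => by rw [Real.exp_add]; ring,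
      show ∀ a b c : ℝ, rexp a * (c * rexp b) = c * rexp (a + b) from
      fun a b c => by rw [Real.exp_add]; ring]
    congr 1
    field_simp
    ring
  simp_rw [key]
  rw [integral_const_mul _ _, integral_gaussianPDFReal_eq_one _ hv, mul_one]

lemma pi_gauss_eq (k : ℕ) (g : Fin k → ℝ) (v : ℝ≥0) (hv : v ≠ 0) :
    (Measure.pi fun i => gaussianReal (g i) v) =
      (volume : Measure (Fin k → ℝ)).withDensity
        (fun t => ENNReal.ofReal (∏ i, gaussianPDFReal (g i) v (t i))) := by
  refine Measure.pi_eq fun s hs => ?_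
  rw [withDensity_apply _ (MeasurableSet.univ_pi hs),
    ← lintegral_indicator (MeasurableSet.univ_pi hs)
      (fun t => ENNReal.ofReal (∏ i, gaussianPDFReal (g i) v (t i)))]
  have h1 : ∀ t, (Set.univ.pi s).indicator
      (fun t => ENNReal.ofReal (∏ i, gaussianPDFReal (g i) v (t i))) t
      = ENNReal.ofReal (∏ i, (s i).indicator (gaussianPDFReal (g i) v) (t i)) := by
    intro t
    by_cases ht : t ∈ Set.univ.pi s
    · rw [Set.indicator_of_mem ht]
      congr 1
      exact Finset.prod_congr rfl fun i _ =>
        (Set.indicator_of_mem (ht i (Set.mem_univ i)) _).symm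
    · rw [Set.indicator_of_notMem ht]
      simp only [Set.mem_univ_pi, not_forall] at ht
      obtain ⟨i, hi⟩ := ht
      rw [Finset.prod_eq_zero (Finset.mem_univ i) (Set.indicator_of_notMem hi _),
        ENNReal.ofReal_zero]
  simp_rw [h1]
  have hint : Integrable (fun t : Fin k → ℝ =>
      ∏ i, (s i).indicator (gaussianPDFReal (g i) v) (t i)) :=
    Integrable.fintype_prod fun i => (integrable_gaussianPDFReal _ _).indicator (hs i)
  rw [← ofReal_integral_eq_lintegral_ofReal hint (ae_of_all _ fun t =>
    Finset.prod_nonneg fun i _ => Set.indicator_nonneg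
      (fun y _ => gaussianPDFReal_nonneg _ _ y) _)]
  rw [MeasureTheory.integral_fintype_prod_volume_eq_prod]
  rw [ENNReal.ofReal_prod_of_nonneg fun i _ =>
    integral_nonneg (Set.indicator_nonneg (fun y _ => gaussianPDFReal_nonneg _ _ y))]
  refine Finset.prod_congr rfl fun i _ => ?_
  rw [integral_indicator (hs i), ← gaussianReal_apply_eq_integral _ hv]


/-- The Gaussian mechanism with ℓ₂-sensitivity `Δ` and noise scale `σ` satisfies
`(α, α Δ² / (2 σ²))`-RDP for every `α > 1`. -/
theorem gaussianMechanism_rdp {X : Type*} (Nbr : X → X → Prop) (k : ℕ)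
    (f : X → Fin k → ℝ) (Δ : ℝ) (σ : ℝ≥0) (hσ : 0 < σ) (hΔ : 0 ≤ Δ)
    (hsens : ∀ x x', Nbr x x' → Real.sqrt (∑ i, (f x i - f x' i) ^ 2) ≤ Δ)
    (α : ℝ) (hα : 1 < α) :
    ∀ x x', Nbr x x' →
      renyiDiv α (gaussianMechanism k f σ x) (gaussianMechanism k f σ x') ≤
        α * Δ ^ 2 / (2 * (σ : ℝ) ^ 2) := by
  intro x x' hxx'
  set v : ℝ≥0 := σ ^ 2 with hvdef
  have hv : v ≠ 0 := pow_ne_zero 2 hσ.ne'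
  have hv' : (0:ℝ) < v := lt_of_le_of_ne v.coe_nonneg (by exact_mod_cast hv.symm)
  set P := gaussianMechanism k f σ x with hPdef
  set Q := gaussianMechanism k f σ x' with hQdef
  set qR : (Fin k → ℝ) → ℝ := fun t => ∏ i, gaussianPDFReal (f x' i) v (t i) with hqR
  set rR : (Fin k → ℝ) → ℝ :=
    fun t => ∏ i, (gaussianPDFReal (f x i) v (t i) / gaussianPDFReal (f x' i) v (t i)) with hrR
  set g : (Fin k → ℝ) → ℝ≥0∞ := fun t => ENNReal.ofReal (rR t) with hgdef
  have hqRnn : ∀ t, 0 ≤ qR t := fun t =>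
    Finset.prod_nonneg fun i _ => gaussianPDFReal_nonneg _ _ _
  have hrRnn : ∀ t, 0 ≤ rR t := fun t =>
    Finset.prod_nonneg fun i _ => div_nonneg (gaussianPDFReal_nonneg _ _ _)
      (gaussianPDFReal_nonneg _ _ _)
  have hrRmeas : Measurable rR :=
    Finset.measurable_prod _ fun i _ =>
      ((measurable_gaussianPDFReal _ _).comp (measurable_pi_apply i)).div
      ((measurable_gaussianPDFReal _ _).comp (measurable_pi_apply i))
  have hqRmeas : Measurable qR :=
    Finset.measurable_prod _ fun i _ =>
      (measurable_gaussianPDFReal _ _).comp (measurable_pi_apply i)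
  have hg : Measurable g := hrRmeas.ennreal_ofReal
  have hP : P = (volume : Measure (Fin k → ℝ)).withDensity
      (fun t => ENNReal.ofReal (∏ i, gaussianPDFReal (f x i) v (t i))) :=
    pi_gauss_eq k (f x) v hv
  have hQ : Q = (volume : Measure (Fin k → ℝ)).withDensity (fun t => ENNReal.ofReal (qR t)) :=
    pi_gauss_eq k (f x') v hv
  haveI : SigmaFinite Q := by
    rw [hQdef]; unfold gaussianMechanism; infer_instance
  have hPQ : P = Q.withDensity g := by
    rw [hP, hQ, ← withDensity_mul _ hqRmeas.ennreal_ofReal hg]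
    congr 1
    funext t
    simp only [Pi.mul_apply, hgdef]
    rw [← ENNReal.ofReal_mul (hqRnn t)]
    congr 1
    rw [hqR, hrR, ← Finset.prod_mul_distrib]
    exact Finset.prod_congr rfl fun i _ => by
      rw [mul_comm, div_mul_cancel₀]
      exact (gaussianPDFReal_pos _ _ _ hv).ne'
  have hrn : (∂P/∂Q) =ᵐ[Q] g := by
    rw [hPQ]; exact Measure.rnDeriv_withDensity Q hg
  have hpt : ∀ t : Fin k → ℝ, (Real.toNNReal (qR t)) • ((g t).toReal ^ α)
      = ∏ i, ((gaussianPDFReal (f x i) v (t i) / gaussianPDFReal (f x' i) v (t i)) ^ α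
          * gaussianPDFReal (f x' i) v (t i)) := by
    intro t
    rw [NNReal.smul_def, Real.coe_toNNReal _ (hqRnn t), hgdef]
    dsimp only
    rw [ENNReal.toReal_ofReal (hrRnn t), hrR]
    dsimp only
    rw [← Real.finset_prod_rpow _ _ (fun i _ => div_nonneg (gaussianPDFReal_nonneg _ _ _)
      (gaussianPDFReal_nonneg _ _ _)) α, Finset.prod_mul_distrib, hqR]
    dsimp only
    simp only [smul_eq_mul, div_eq_mul_inv]
    ring
  have hI : ∫ t, ((∂P/∂Q) t).toReal ^ α ∂Q
      = rexp (α * (α - 1) * (∑ i, (f x i - f x' i) ^ 2) / (2 * v)) := by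
    calc ∫ t, ((∂P/∂Q) t).toReal ^ α ∂Q
        = ∫ t, (g t).toReal ^ α ∂Q := integral_congr_ae (hrn.mono fun t ht => by dsimp only; rw [ht])
      _ = ∫ t, (Real.toNNReal (qR t)) • ((g t).toReal ^ α) ∂(volume : Measure (Fin k → ℝ)) := by
          rw [hQ]
          exact integral_withDensity_eq_integral_smul
            (show Measurable fun t => (qR t).toNNReal from measurable_real_toNNReal.comp hqRmeas)
            (fun t => (g t).toReal ^ α)
      _ = ∫ t : Fin k → ℝ, ∏ i, ((gaussianPDFReal (f x i) v (t i)
            / gaussianPDFReal (f x' i) v (t i)) ^ α * gaussianPDFReal (f x' i) v (t i)) :=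
          integral_congr_ae (ae_of_all _ hpt)
      _ = ∏ i, ∫ y, ((gaussianPDFReal (f x i) v y / gaussianPDFReal (f x' i) v y) ^ α
            * gaussianPDFReal (f x' i) v y) :=
          MeasureTheory.integral_fintype_prod_volume_eq_prod
            (fun i y => (gaussianPDFReal (f x i) v y / gaussianPDFReal (f x' i) v y) ^ α
              * gaussianPDFReal (f x' i) v y)
      _ = ∏ i, rexp (α * (α - 1) * (f x i - f x' i) ^ 2 / (2 * v)) :=
          Finset.prod_congr rfl fun i _ => oneDim _ _ v hv α
      _ = rexp (α * (α - 1) * (∑ i, (f x i - f x' i) ^ 2) / (2 * v)) := by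
          rw [← Real.exp_sum]
          congr 1
          rw [← Finset.sum_div, ← Finset.mul_sum]
  have hS : (∑ i, (f x i - f x' i) ^ 2) ≤ Δ ^ 2 := by
    have h0 : (0:ℝ) ≤ ∑ i, (f x i - f x' i) ^ 2 :=
      Finset.sum_nonneg fun i _ => sq_nonneg _
    have h1 := hsens x x' hxx'
    nlinarith [Real.sq_sqrt h0, Real.sqrt_nonneg (∑ i, (f x i - f x' i) ^ 2)]
  rw [renyiDiv, hI, Real.log_exp]
  have hα1 : α - 1 ≠ 0 := sub_ne_zero.mpr hα.ne'
  have hcoe : ((v : ℝ)) = ((σ : ℝ)) ^ 2 := by rw [hvdef]; push_cast; ring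
  rw [show (α - 1)⁻¹ * (α * (α - 1) * (∑ i, (f x i - f x' i) ^ 2) / (2 * v))
      = α * (∑ i, (f x i - f x' i) ^ 2) / (2 * v) from by field_simp]
  rw [hcoe]
  have hσ2 : (0:ℝ) < 2 * (σ:ℝ) ^ 2 := by
    have : (0:ℝ) < (σ:ℝ) := NNReal.coe_pos.mpr hσ
    positivity
  exact (div_le_div_iff_of_pos_right hσ2).mpr (mul_le_mul_of_nonneg_left hS (by linarith : (0:ℝ) ≤ α))
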